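/- The pair y₁ = (1+x₃²)^{1/3}, y₂ = x₁³/(x₁² + (1+x₃²)^{1/3}x₁x₂ + (1+x₃²)^{2/3}x₂²) is a continuous (semialgebraic) solution on ℝ³ of the linear equation x₁³x₂·y₁ + (x₁³ − (1+x₃²)x₂³)·y₂ = x₁⁴, with y₂ extended by 0 where x₁ = x₂ = 0; moreover |y₂| ≤ 2|x₁| everywhere. -/

import Mathlib

private noncomputable def Dfun (p : ℝ × ℝ × ℝ) : ℝ :=
  p.1 ^ 2 + (1 + p.2.2 ^ 2) ^ ((1 : ℝ) / 3) * p.1 * p.2.1 +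
    (1 + p.2.2 ^ 2) ^ ((2 : ℝ) / 3) * p.2.1 ^ 2

private noncomputable def Yfun (p : ℝ × ℝ × ℝ) : ℝ := p.1 ^ 3 / Dfun p

private lemma aux_c_ge (x₃ : ℝ) : 1 ≤ (1 + x₃ ^ 2) ^ ((1 : ℝ) / 3) := by
  have h1 : (1 : ℝ) ≤ 1 + x₃ ^ 2 := by nlinarith [sq_nonneg x₃]
  calc (1 : ℝ) = (1 : ℝ) ^ ((1 : ℝ) / 3) := by simp
    _ ≤ (1 + x₃ ^ 2) ^ ((1 : ℝ) / 3) :=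
      Real.rpow_le_rpow (by norm_num) h1 (by norm_num)

private lemma aux_c3 (x₃ : ℝ) : ((1 + x₃ ^ 2) ^ ((1 : ℝ) / 3)) ^ 3 = 1 + x₃ ^ 2 := by
  have h0 : (0 : ℝ) ≤ 1 + x₃ ^ 2 := by positivity
  rw [← Real.rpow_natCast ((1 + x₃ ^ 2) ^ ((1 : ℝ) / 3)) 3, ← Real.rpow_mul h0]
  norm_num

private lemma aux_c2 (x₃ : ℝ) :
    (1 + x₃ ^ 2) ^ ((2 : ℝ) / 3) = ((1 + x₃ ^ 2) ^ ((1 : ℝ) / 3)) ^ 2 := by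
  have h0 : (0 : ℝ) ≤ 1 + x₃ ^ 2 := by positivity
  rw [← Real.rpow_natCast ((1 + x₃ ^ 2) ^ ((1 : ℝ) / 3)) 2, ← Real.rpow_mul h0]
  norm_num

private lemma aux_D (x₁ x₂ c : ℝ) (hc : 1 ≤ c) :
    (x₁ ^ 2 + x₂ ^ 2) / 2 ≤ x₁ ^ 2 + c * x₁ * x₂ + c ^ 2 * x₂ ^ 2 := by
  nlinarith [sq_nonneg (x₁ + c * x₂), sq_nonneg x₂, sq_nonneg (c - 1),
    mul_nonneg (sub_nonneg.2 hc) (sq_nonneg x₂)]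

private lemma Dfun_lb (p : ℝ × ℝ × ℝ) : (p.1 ^ 2 + p.2.1 ^ 2) / 2 ≤ Dfun p := by
  have h := aux_D p.1 p.2.1 ((1 + p.2.2 ^ 2) ^ ((1 : ℝ) / 3)) (aux_c_ge p.2.2)
  rw [Dfun, aux_c2 p.2.2]
  linarith

private lemma Dfun_zero {p : ℝ × ℝ × ℝ} (hp : Dfun p = 0) : p.1 = 0 ∧ p.2.1 = 0 := by
  have h := Dfun_lb p
  rw [hp] at h
  constructor <;> nlinarith [sq_nonneg p.1, sq_nonneg p.2.1]

private lemma Dfun_pos {p : ℝ × ℝ × ℝ} (h : Dfun p ≠ 0) : 0 < Dfun p := by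
  rcases lt_or_eq_of_le (le_trans (by positivity) (Dfun_lb p)) with h' | h'
  · exact h'
  · exact absurd h'.symm h

private lemma Yfun_bound (q : ℝ × ℝ × ℝ) : |Yfun q| ≤ 2 * |q.1| := by
  rcases eq_or_ne (Dfun q) 0 with h | h
  · simp only [Yfun, h, div_zero, abs_zero]; positivity
  · have hpos := Dfun_pos h
    rw [Yfun, abs_div, abs_of_pos hpos, div_le_iff₀ hpos]
    have h1 : |q.1 ^ 3| = |q.1| * q.1 ^ 2 := by
      rw [abs_pow, pow_succ, sq_abs]; ring
    rw [h1]
    have h2 : q.1 ^ 2 ≤ 2 * Dfun q := by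
      have := Dfun_lb q
      nlinarith [sq_nonneg q.2.1]
    nlinarith [abs_nonneg q.1]

private lemma Dfun_cont : Continuous Dfun := by
  have hbase : Continuous fun p : ℝ × ℝ × ℝ => (1 : ℝ) + p.2.2 ^ 2 :=
    continuous_const.add ((continuous_snd.snd).pow 2)
  exact ((continuous_fst.pow 2).add
    (((hbase.rpow_const fun _ => Or.inr (by norm_num)).mul continuous_fst).mul
      continuous_snd.fst)).add
    ((hbase.rpow_const fun _ => Or.inr (by norm_num)).mul ((continuous_snd.fst).pow 2))

private lemma Yfun_cont : Continuous Yfun := by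
  rw [continuous_iff_continuousAt]
  intro p
  rcases eq_or_ne (Dfun p) 0 with h | h
  · have hp1 : p.1 = 0 := (Dfun_zero h).1
    have hval : Yfun p = 0 := by rw [Yfun, hp1]; simp
    rw [ContinuousAt, hval]
    apply squeeze_zero_norm (fun q => Yfun_bound q)
    have ht : Filter.Tendsto (fun q : ℝ × ℝ × ℝ => 2 * |q.1|) (nhds p) (nhds (2 * |p.1|)) :=
      (continuous_const.mul continuous_fst.abs).continuousAt
    rwa [hp1, abs_zero, mul_zero] at ht
  · exact ((continuous_fst.pow 3).continuousAt).div Dfun_cont.continuousAt h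

theorem stmt9 : ∃ y₂ : ℝ × ℝ × ℝ → ℝ, Continuous y₂ ∧
    (∀ x₁ x₂ x₃ : ℝ, ¬ (x₁ = 0 ∧ x₂ = 0) →
      y₂ (x₁, x₂, x₃) = x₁ ^ 3 /
        (x₁ ^ 2 + (1 + x₃ ^ 2) ^ ((1 : ℝ) / 3) * x₁ * x₂ +
          (1 + x₃ ^ 2) ^ ((2 : ℝ) / 3) * x₂ ^ 2)) ∧
    (∀ x₃ : ℝ, y₂ (0, 0, x₃) = 0) ∧
    (∀ x₁ x₂ x₃ : ℝ,
      x₁ ^ 3 * x₂ * (1 + x₃ ^ 2) ^ ((1 : ℝ) / 3) +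
        (x₁ ^ 3 - (1 + x₃ ^ 2) * x₂ ^ 3) * y₂ (x₁, x₂, x₃) = x₁ ^ 4) ∧
    ∀ x₁ x₂ x₃ : ℝ, |y₂ (x₁, x₂, x₃)| ≤ 2 * |x₁| := by
  refine ⟨Yfun, Yfun_cont, ?_, ?_, ?_, ?_⟩
  · intro x₁ x₂ x₃ _
    rfl
  · intro x₃
    simp [Yfun, Dfun]
  · intro x₁ x₂ x₃
    rcases eq_or_ne (Dfun (x₁, x₂, x₃)) 0 with h | h
    · obtain ⟨h1, h2⟩ := Dfun_zero h
      simp only at h1 h2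
      subst h1; subst h2
      simp [Yfun, h]
    · have hc3 := aux_c3 x₃
      have hc2 := aux_c2 x₃
      have hD : Dfun (x₁, x₂, x₃) =
          x₁ ^ 2 + (1 + x₃ ^ 2) ^ ((1 : ℝ) / 3) * x₁ * x₂ +
            ((1 + x₃ ^ 2) ^ ((1 : ℝ) / 3)) ^ 2 * x₂ ^ 2 := by
        rw [Dfun, hc2]
      rw [Yfun, hD]
      rw [hD] at h
      set c := (1 + x₃ ^ 2) ^ ((1 : ℝ) / 3) with hc
      rw [← hc3]
      have hinv := mul_inv_cancel₀ h
      linear_combination (x₁ - c * x₂) * x₁ ^ 3 * hinv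
  · intro x₁ x₂ x₃
    exact Yfun_bound (x₁, x₂, x₃)
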